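/- For n ≥ 2, the automorphism group of the Hasse diagram of ∂Δⁿ has order 2·(n+1)!, i.e., |Aut(H(∂Δⁿ))| = 2·|Aut(∂Δⁿ)|. -/

import Mathlib

open Finset

/-- An abstract simplicial complex on vertex type `V`. -/
structure SComplex (V : Type) [DecidableEq V] where
  faces : Set (Finset V)
  nonempty_of_mem : ∀ {s : Finset V}, s ∈ faces → s.Nonempty
  down_closed : ∀ {s t : Finset V}, s ∈ faces → t ⊆ s → t.Nonempty → t ∈ faces

variable {V : Type} [DecidableEq V]

/-- A primitive vector: a codimension-1 face pair of simplices of `K`. -/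
def IsPrimitive (K : SComplex V) (p : Finset V × Finset V) : Prop :=
  p.1 ∈ K.faces ∧ p.2 ∈ K.faces ∧ p.1 ⊆ p.2 ∧ p.2.card = p.1.card + 1

/-- A discrete vector field on `K`. -/
def IsDVF (K : SComplex V) (W : Set (Finset V × Finset V)) : Prop :=
  (∀ p ∈ W, IsPrimitive K p) ∧
    ∀ p ∈ W, ∀ q ∈ W, p ≠ q →
      p.1 ≠ q.1 ∧ p.1 ≠ q.2 ∧ p.2 ≠ q.1 ∧ p.2 ≠ q.2

/-- `W` admits a nontrivial closed `V`-path. -/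
def HasClosedPath (W : Set (Finset V × Finset V)) : Prop :=
  ∃ (k : ℕ) (α β : ℕ → Finset V), 1 ≤ k ∧
    (∀ i < k, (α i, β i) ∈ W) ∧
    (∀ i < k, α (i + 1) ⊆ β i ∧ (β i).card = (α (i + 1)).card + 1 ∧ α (i + 1) ≠ α i) ∧
    α k = α 0

/-- A gradient vector field on `K`. -/
def IsGVF (K : SComplex V) (W : Set (Finset V × Finset V)) : Prop :=
  IsDVF K W ∧ ¬ HasClosedPath W

theorem IsGVF.mono {K : SComplex V} {W W' : Set (Finset V × Finset V)}
    (h : IsGVF K W) (hsub : W' ⊆ W) : IsGVF K W' := by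
  obtain ⟨⟨h1, h2⟩, h3⟩ := h
  refine ⟨⟨fun p hp => h1 p (hsub hp), fun p hp q hq hpq => h2 p (hsub hp) q (hsub hq) hpq⟩, ?_⟩
  rintro ⟨k, α, β, hk, hW, hrest, hclosed⟩
  exact h3 ⟨k, α, β, hk, fun i hi => hsub (hW i hi), hrest, hclosed⟩

/-- The vertices of the Morse complex of `K`: primitive vectors. -/
def MVert (K : SComplex V) : Type := {p : Finset V × Finset V // IsPrimitive K p}

instance (K : SComplex V) : DecidableEq (MVert K) :=
  Subtype.instDecidableEq

/-- The Morse complex of `K`: simplices are gradient vector fields. -/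
def morse (K : SComplex V) : SComplex (MVert K) where
  faces := {s : Finset (MVert K) | s.Nonempty ∧
    IsGVF K {p | ∃ x ∈ s, (x : {p : Finset V × Finset V // IsPrimitive K p}).val = p}}
  nonempty_of_mem := fun h => h.1
  down_closed := by
    rintro s t ⟨-, hgvf⟩ hts htne
    exact ⟨htne, hgvf.mono (by rintro p ⟨x, hx, rfl⟩; exact ⟨x, hts hx, rfl⟩)⟩

/-- The image of a primitive vector under a vertex map. -/
def indVert (e : V → V) (p : Finset V × Finset V) : Finset V × Finset V :=
  (p.1.image e, p.2.image e)

/-- The automorphism group of a simplicial complex, as a subgroup of the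
permutations of its vertex set. -/
def autK (K : SComplex V) : Subgroup (Equiv.Perm V) where
  carrier := {e | ∀ s : Finset V, s ∈ K.faces ↔ s.image e ∈ K.faces}
  one_mem' := by intro s; simp
  mul_mem' := by
    intro a b ha hb s
    rw [hb s]
    have : (s.image b).image a = s.image (a * b) := by
      rw [Finset.image_image]; rfl
    rw [ha (s.image b), this]
  inv_mem' := by
    intro a ha s
    have := ha (s.image ⇑(a⁻¹))
    have h2 : (s.image ⇑(a⁻¹)).image ⇑a = s := by
      rw [Finset.image_image]
      simp [Function.comp_def]
    rw [h2] at this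
    exact this.symm

/-- The Hasse diagram of `K`, as a simple graph on the simplices of `K`. -/
def hasse (K : SComplex V) : SimpleGraph {s : Finset V // s ∈ K.faces} where
  Adj σ τ := (σ.1 ⊆ τ.1 ∧ τ.1.card = σ.1.card + 1) ∨ (τ.1 ⊆ σ.1 ∧ σ.1.card = τ.1.card + 1)
  symm := by tauto
  loopless := ⟨fun σ h => by rcases h with ⟨-, h⟩ | ⟨-, h⟩ <;> omega⟩

/-- The automorphism group of a simple graph, as a subgroup of the permutations
of its vertex set. -/
def autG {α : Type} (G : SimpleGraph α) : Subgroup (Equiv.Perm α) where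
  carrier := {e | ∀ u v, G.Adj (e u) (e v) ↔ G.Adj u v}
  one_mem' := by intro u v; simp
  mul_mem' := by
    intro a b ha hb u v
    rw [show ((a * b : Equiv.Perm α) u) = a (b u) from rfl,
      show ((a * b : Equiv.Perm α) v) = a (b v) from rfl, ha, hb]
  inv_mem' := by
    intro a ha u v
    have := ha (a⁻¹ u) (a⁻¹ v)
    simpa using this.symm

/-- The boundary of the `n`-simplex: all nonempty proper subsets of the
`(n+1)`-element vertex set. -/
def bdSimplex (n : ℕ) : SComplex (Fin (n + 1)) where
  faces := {s | s.Nonempty ∧ s ≠ Finset.univ}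
  nonempty_of_mem := fun h => h.1
  down_closed := by
    rintro s t ⟨-, hs⟩ hts htne
    refine ⟨htne, fun h => hs ?_⟩
    subst h
    exact Finset.univ_subset_iff.mp hts

instance (n : ℕ) : DecidablePred (· ∈ (bdSimplex n).faces) :=
  fun s => inferInstanceAs (Decidable (s.Nonempty ∧ s ≠ Finset.univ))

/-- The vertices of the Hasse diagram of `∂Δⁿ`: the simplices of `∂Δⁿ`. -/
abbrev BdVert (n : ℕ) : Type := {s : Finset (Fin (n + 1)) // s ∈ (bdSimplex n).faces}

instance (n : ℕ) : Fintype (BdVert n) := Subtype.fintype _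

instance instHasseAdjDecidable (K : SComplex V) : DecidableRel (hasse K).Adj :=
  fun a b => inferInstanceAs
    (Decidable ((a.1 ⊆ b.1 ∧ b.1.card = a.1.card + 1) ∨ (b.1 ⊆ a.1 ∧ a.1.card = b.1.card + 1)))

section AuxBd

variable {n : ℕ}

lemma mem_bd_iff {s : Finset (Fin (n + 1))} :
    s ∈ (bdSimplex n).faces ↔ 1 ≤ s.card ∧ s.card ≤ n := by
  constructor
  · rintro ⟨h1, h2⟩
    refine ⟨Finset.card_pos.mpr h1, ?_⟩
    have hle := Finset.card_le_univ s
    rw [Fintype.card_fin] at hle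
    rcases Nat.lt_or_ge s.card (n + 1) with h | h
    · omega
    · exfalso
      exact h2 (Finset.eq_univ_of_card s (by
        rw [Fintype.card_fin]; omega))
  · rintro ⟨h1, h2⟩
    refine ⟨Finset.card_pos.mp h1, fun h => ?_⟩
    subst h
    rw [Finset.card_univ, Fintype.card_fin] at h2
    omega

lemma bd_card_le {s : BdVert n} : s.1.card ≤ n := (mem_bd_iff.mp s.2).2

lemma bd_card_pos {s : BdVert n} : 1 ≤ s.1.card := (mem_bd_iff.mp s.2).1

lemma bd_adj_iff {a b : BdVert n} :
    (hasse (bdSimplex n)).Adj a b ↔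
      (a.1 ⊆ b.1 ∧ b.1.card = a.1.card + 1) ∨ (b.1 ⊆ a.1 ∧ a.1.card = b.1.card + 1) :=
  Iff.rfl

end AuxBd

section AuxBd2

variable {n : ℕ}

lemma autK_bd_eq_top : autK (bdSimplex n) = ⊤ := by
  ext e
  simp only [Subgroup.mem_top, iff_true]
  intro s
  show s ∈ (bdSimplex n).faces ↔ _
  rw [mem_bd_iff, mem_bd_iff, Finset.card_image_of_injective _ e.injective]

/-- The graph automorphism of the Hasse diagram induced by a vertex permutation. -/
def permV (e : Equiv.Perm (Fin (n + 1))) : Equiv.Perm (BdVert n) where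
  toFun s := ⟨s.1.image e, by
    rw [mem_bd_iff, Finset.card_image_of_injective _ e.injective]
    exact ⟨bd_card_pos, bd_card_le⟩⟩
  invFun s := ⟨s.1.image e.symm, by
    rw [mem_bd_iff, Finset.card_image_of_injective _ e.symm.injective]
    exact ⟨bd_card_pos, bd_card_le⟩⟩
  left_inv s := by
    ext x
    simp only [Finset.image_image, Finset.mem_image, Function.comp_apply,
      Equiv.symm_apply_apply]
    constructor
    · rintro ⟨y, hy, rfl⟩; exact hy
    · intro hx; exact ⟨x, hx, rfl⟩
  right_inv s := by
    ext x
    simp only [Finset.image_image, Finset.mem_image, Function.comp_apply,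
      Equiv.apply_symm_apply]
    constructor
    · rintro ⟨y, hy, rfl⟩; exact hy
    · intro hx; exact ⟨x, hx, rfl⟩

lemma permV_coe (e : Equiv.Perm (Fin (n + 1))) (s : BdVert n) :
    ((permV e) s).1 = s.1.image e := rfl

lemma permV_mem_autG (e : Equiv.Perm (Fin (n + 1))) :
    permV e ∈ autG (hasse (bdSimplex n)) := by
  intro u v
  rw [bd_adj_iff, bd_adj_iff]
  simp only [permV_coe]
  rw [Finset.image_subset_image_iff e.injective,
    Finset.image_subset_image_iff e.injective,
    Finset.card_image_of_injective _ e.injective,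
    Finset.card_image_of_injective _ e.injective]

/-- The complementation automorphism of the Hasse diagram. -/
def complV (n : ℕ) : Equiv.Perm (BdVert n) where
  toFun s := ⟨s.1ᶜ, by
    rw [mem_bd_iff, Finset.card_compl, Fintype.card_fin]
    have h1 := @bd_card_pos n s
    have h2 := @bd_card_le n s
    omega⟩
  invFun s := ⟨s.1ᶜ, by
    rw [mem_bd_iff, Finset.card_compl, Fintype.card_fin]
    have h1 := @bd_card_pos n s
    have h2 := @bd_card_le n s
    omega⟩
  left_inv s := by simp
  right_inv s := by simp

lemma complV_card (s : BdVert n) : ((complV n) s).1.card = n + 1 - s.1.card := by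
  show s.1ᶜ.card = _
  rw [Finset.card_compl, Fintype.card_fin]

lemma complV_coe (s : BdVert n) : ((complV n) s).1 = s.1ᶜ := rfl

lemma complV_mem_autG : complV n ∈ autG (hasse (bdSimplex n)) := by
  intro u v
  rw [bd_adj_iff, bd_adj_iff]
  simp only [complV_coe]
  rw [Finset.compl_subset_compl, Finset.compl_subset_compl,
    Finset.card_compl, Finset.card_compl, Fintype.card_fin]
  have h1 := @bd_card_pos n u
  have h2 := @bd_card_le n u
  have h3 := @bd_card_pos n v
  have h4 := @bd_card_le n v
  constructor
  · rintro (⟨h, hc⟩ | ⟨h, hc⟩)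
    · exact Or.inr ⟨h, by omega⟩
    · exact Or.inl ⟨h, by omega⟩
  · rintro (⟨h, hc⟩ | ⟨h, hc⟩)
    · exact Or.inr ⟨h, by omega⟩
    · exact Or.inl ⟨h, by omega⟩

end AuxBd2

section AuxBd3

variable {n : ℕ}

/-- `v` is a common neighbor of `s` and `w` in the Hasse diagram. -/
def CNrel (s w v : BdVert n) : Prop :=
  (hasse (bdSimplex n)).Adj s v ∧ (hasse (bdSimplex n)).Adj w v

/-- The key relation: `w` is a non-neighbor of `s` with exactly one common neighbor. -/
def Rrel (s w : BdVert n) : Prop :=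
  w ≠ s ∧ ¬ (hasse (bdSimplex n)).Adj s w ∧ ∃! v, CNrel s w v

lemma ne_coe {s w : BdVert n} (h : w ≠ s) : w.1 ≠ s.1 :=
  fun hh => h (Subtype.ext hh)

/-- Middle-level vertices: every common neighbor has a companion. -/
lemma two_common {s w v : BdVert n} (hs2 : 2 ≤ s.1.card) (hsn : s.1.card + 1 ≤ n)
    (hws : w ≠ s) (hv : CNrel s w v) : ∃ v', v' ≠ v ∧ CNrel s w v' := by
  obtain ⟨hsv, hwv⟩ := hv
  have hwsne : w.1 ≠ s.1 := ne_coe hws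
  rcases (bd_adj_iff.mp hsv) with ⟨hsub1, hc1⟩ | ⟨hsub1, hc1⟩
  · rcases (bd_adj_iff.mp hwv) with ⟨hsub2, hc2⟩ | ⟨hsub2, hc2⟩
    · -- case 1: s ⊆ v, w ⊆ v; v' = s ∩ w
      have hcw : w.1.card = s.1.card := by omega
      have hu1 : s.1 ∪ w.1 ⊆ v.1 := Finset.union_subset hsub1 hsub2
      have hu2 : s.1.card + 1 ≤ (s.1 ∪ w.1).card := by
        rcases Nat.lt_or_ge s.1.card (s.1 ∪ w.1).card with h | h
        · omega
        · exfalso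
          have := Finset.eq_of_subset_of_card_le Finset.subset_union_left h
          exact hwsne (by
            have : w.1 ⊆ s.1 := this ▸ Finset.subset_union_right
            exact Finset.eq_of_subset_of_card_le this (by omega))
      have hu3 : (s.1 ∪ w.1).card ≤ s.1.card + 1 :=
        hc1 ▸ Finset.card_le_card hu1
      have hie := Finset.card_union_add_card_inter s.1 w.1
      have hci : (s.1 ∩ w.1).card = s.1.card - 1 := by omega
      refine ⟨⟨s.1 ∩ w.1, by rw [mem_bd_iff]; omega⟩, ?_, ?_, ?_⟩
      · intro h
        have := congrArg (fun t : BdVert n => t.1.card) h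
        simp only [hci, hc1] at this
        omega
      · exact bd_adj_iff.mpr (Or.inr ⟨Finset.inter_subset_left, by show s.1.card = (s.1 ∩ w.1).card + 1; omega⟩)
      · exact bd_adj_iff.mpr (Or.inr ⟨Finset.inter_subset_right, by show w.1.card = (s.1 ∩ w.1).card + 1; omega⟩)
    · -- case 3: s ⊆ v ⊆ w; v' = insert b s for b ∈ w \ v
      have hcw : w.1.card = s.1.card + 2 := by omega
      have hbd : (w.1 \ v.1).Nonempty := by
        rw [← Finset.card_pos, Finset.card_sdiff_of_subset hsub2]
        omega
      obtain ⟨b, hb⟩ := hbd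
      rw [Finset.mem_sdiff] at hb
      have hbs : b ∉ s.1 := fun h => hb.2 (hsub1 h)
      have hvle := @bd_card_le n v
      refine ⟨⟨insert b s.1, by
        rw [mem_bd_iff, Finset.card_insert_of_notMem hbs]; omega⟩, ?_, ?_, ?_⟩
      · intro h
        have : b ∈ v.1 := by
          have := congrArg (fun t : BdVert n => t.1) h
          simp only at this
          rw [← this]
          exact Finset.mem_insert_self b s.1
        exact hb.2 this
      · exact bd_adj_iff.mpr (Or.inl ⟨Finset.subset_insert b s.1, by
          simp only [Finset.card_insert_of_notMem hbs]⟩)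
      · exact bd_adj_iff.mpr (Or.inr ⟨Finset.insert_subset hb.1 (hsub1.trans hsub2), by
          simp only [Finset.card_insert_of_notMem hbs]; omega⟩)
  · rcases (bd_adj_iff.mp hwv) with ⟨hsub2, hc2⟩ | ⟨hsub2, hc2⟩
    · -- case 4: w ⊆ v ⊆ s; v' = insert b w for b ∈ s \ v
      have hcw : w.1.card + 2 = s.1.card := by omega
      have hbd : (s.1 \ v.1).Nonempty := by
        rw [← Finset.card_pos, Finset.card_sdiff_of_subset hsub1]
        omega
      obtain ⟨b, hb⟩ := hbd
      rw [Finset.mem_sdiff] at hb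
      have hbw : b ∉ w.1 := fun h => hb.2 (hsub2 h)
      refine ⟨⟨insert b w.1, by
        rw [mem_bd_iff, Finset.card_insert_of_notMem hbw]
        have := @bd_card_le n s
        omega⟩, ?_, ?_, ?_⟩
      · intro h
        have : b ∈ v.1 := by
          have := congrArg (fun t : BdVert n => t.1) h
          simp only at this
          rw [← this]
          exact Finset.mem_insert_self b w.1
        exact hb.2 this
      · exact bd_adj_iff.mpr (Or.inr ⟨Finset.insert_subset hb.1 (hsub2.trans hsub1), by
          simp only [Finset.card_insert_of_notMem hbw]; omega⟩)
      · exact bd_adj_iff.mpr (Or.inl ⟨Finset.subset_insert b w.1, by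
          simp only [Finset.card_insert_of_notMem hbw]⟩)
    · -- case 2: v ⊆ s, v ⊆ w; v' = s ∪ w
      have hcw : w.1.card = s.1.card := by omega
      have hii : v.1 ⊆ s.1 ∩ w.1 := Finset.subset_inter hsub1 hsub2
      have hi1 : s.1.card - 1 ≤ (s.1 ∩ w.1).card := by
        have := Finset.card_le_card hii
        omega
      have hi2 : (s.1 ∩ w.1).card ≤ s.1.card - 1 := by
        rcases Nat.lt_or_ge (s.1 ∩ w.1).card s.1.card with h | h
        · omega
        · exfalso
          have h1 : s.1 ∩ w.1 = s.1 := Finset.eq_of_subset_of_card_le Finset.inter_subset_left (by omega)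
          have : s.1 ⊆ w.1 := by
            rw [← h1]
            exact Finset.inter_subset_right
          exact hwsne (Finset.eq_of_subset_of_card_le this (by omega)).symm
      have hie := Finset.card_union_add_card_inter s.1 w.1
      have hcu : (s.1 ∪ w.1).card = s.1.card + 1 := by omega
      refine ⟨⟨s.1 ∪ w.1, by rw [mem_bd_iff]; omega⟩, ?_, ?_, ?_⟩
      · intro h
        have := congrArg (fun t : BdVert n => t.1.card) h
        simp only [hcu] at this
        omega
      · exact bd_adj_iff.mpr (Or.inl ⟨Finset.subset_union_left, by show (s.1 ∪ w.1).card = s.1.card + 1; omega⟩)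
      · exact bd_adj_iff.mpr (Or.inl ⟨Finset.subset_union_right, by show (s.1 ∪ w.1).card = w.1.card + 1; omega⟩)

end AuxBd3

section AuxBd4

variable {n : ℕ}

/-- Two distinct singletons satisfy `Rrel`. -/
lemma rrel_singletons (hn : 2 ≤ n) {s w : BdVert n} (hs : s.1.card = 1)
    (hw : w.1.card = 1) (hws : w ≠ s) : Rrel s w := by
  obtain ⟨i, hi⟩ := Finset.card_eq_one.mp hs
  obtain ⟨j, hj⟩ := Finset.card_eq_one.mp hw
  have hij : i ≠ j := by
    intro h
    exact ne_coe hws (by rw [hi, hj, h])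
  have hji : j ∉ ({i} : Finset (Fin (n + 1))) := by simp [hij.symm]
  have hcv : (insert j {i} : Finset (Fin (n + 1))).card = 2 := by
    rw [Finset.card_insert_of_notMem hji, Finset.card_singleton]
  refine ⟨hws, ?_, ?_⟩
  · rintro (⟨hsub, hc⟩ | ⟨hsub, hc⟩) <;> omega
  · refine ⟨⟨insert j {i}, by rw [mem_bd_iff]; omega⟩, ⟨?_, ?_⟩, ?_⟩
    · exact bd_adj_iff.mpr (Or.inl ⟨by rw [hi]; intro x hx; simp at hx; simp [hx], by
        show (insert j {i} : Finset (Fin (n+1))).card = _; omega⟩)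
    · exact bd_adj_iff.mpr (Or.inl ⟨by rw [hj]; intro x hx; simp at hx; simp [hx], by
        show (insert j {i} : Finset (Fin (n+1))).card = _; omega⟩)
    · rintro v ⟨hsv, hwv⟩
      have h1 : s.1 ⊆ v.1 ∧ v.1.card = 2 := by
        rcases bd_adj_iff.mp hsv with ⟨h, hc⟩ | ⟨h, hc⟩
        · exact ⟨h, by omega⟩
        · exfalso; have := @bd_card_pos n v; omega
      have h2 : w.1 ⊆ v.1 := by
        rcases bd_adj_iff.mp hwv with ⟨h, hc⟩ | ⟨h, hc⟩
        · exact h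
        · exfalso; have := @bd_card_pos n v; omega
      refine Subtype.ext ?_
      show v.1 = insert j {i}
      refine (Finset.eq_of_subset_of_card_le ?_ (by omega)).symm
      rw [Finset.insert_subset_iff, Finset.singleton_subset_iff]
      exact ⟨h2 (hj ▸ Finset.mem_singleton_self j), h1.1 (hi ▸ Finset.mem_singleton_self i)⟩

/-- Two distinct co-singletons satisfy `Rrel`. -/
lemma rrel_cosingletons (hn : 2 ≤ n) {s w : BdVert n} (hs : s.1.card = n)
    (hw : w.1.card = n) (hws : w ≠ s) : Rrel s w := by
  have hwsne : w.1 ≠ s.1 := ne_coe hws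
  -- card of the union is n + 1, so card of the intersection is n - 1
  have hu1 : s.1.card + 1 ≤ (s.1 ∪ w.1).card := by
    rcases Nat.lt_or_ge s.1.card (s.1 ∪ w.1).card with h | h
    · omega
    · exfalso
      have h1 : s.1 = s.1 ∪ w.1 :=
        Finset.eq_of_subset_of_card_le Finset.subset_union_left h
      have : w.1 ⊆ s.1 := h1 ▸ Finset.subset_union_right
      exact hwsne (Finset.eq_of_subset_of_card_le this (by omega))
  have hu2 : (s.1 ∪ w.1).card ≤ n + 1 := by
    have := Finset.card_le_univ (s.1 ∪ w.1)
    rwa [Fintype.card_fin] at this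
  have hie := Finset.card_union_add_card_inter s.1 w.1
  have hci : (s.1 ∩ w.1).card = n - 1 := by omega
  refine ⟨hws, ?_, ?_⟩
  · rintro (⟨hsub, hc⟩ | ⟨hsub, hc⟩) <;> omega
  · refine ⟨⟨s.1 ∩ w.1, by rw [mem_bd_iff]; omega⟩, ⟨?_, ?_⟩, ?_⟩
    · exact bd_adj_iff.mpr (Or.inr ⟨Finset.inter_subset_left, by
        show s.1.card = (s.1 ∩ w.1).card + 1; omega⟩)
    · exact bd_adj_iff.mpr (Or.inr ⟨Finset.inter_subset_right, by
        show w.1.card = (s.1 ∩ w.1).card + 1; omega⟩)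
    · rintro v ⟨hsv, hwv⟩
      have h1 : v.1 ⊆ s.1 ∧ v.1.card = n - 1 := by
        rcases bd_adj_iff.mp hsv with ⟨h, hc⟩ | ⟨h, hc⟩
        · exfalso; have := @bd_card_le n v; omega
        · exact ⟨h, by omega⟩
      have h2 : v.1 ⊆ w.1 := by
        rcases bd_adj_iff.mp hwv with ⟨h, hc⟩ | ⟨h, hc⟩
        · exfalso; have := @bd_card_le n v; omega
        · exact h
      refine Subtype.ext ?_
      show v.1 = s.1 ∩ w.1
      exact Finset.eq_of_subset_of_card_le (Finset.subset_inter h1.1 h2) (by omega)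

/-- A singleton and a co-singleton never have exactly one common neighbor. -/
lemma not_exu_mixed (hn : 2 ≤ n) {s w : BdVert n} (hs : s.1.card = 1)
    (hw : w.1.card = n) : ¬ ∃! v, CNrel s w v := by
  rintro ⟨v, ⟨hsv, hwv⟩, huniq⟩
  have h1 : s.1 ⊆ v.1 ∧ v.1.card = 2 := by
    rcases bd_adj_iff.mp hsv with ⟨h, hc⟩ | ⟨h, hc⟩
    · exact ⟨h, by omega⟩
    · exfalso; have := @bd_card_pos n v; omega
  have h2 : v.1 ⊆ w.1 ∧ n = 3 := by
    rcases bd_adj_iff.mp hwv with ⟨h, hc⟩ | ⟨h, hc⟩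
    · exfalso; have := @bd_card_le n v; omega
    · exact ⟨h, by omega⟩
  have hbd : (w.1 \ v.1).Nonempty := by
    rw [← Finset.card_pos, Finset.card_sdiff_of_subset h2.1]
    omega
  obtain ⟨b, hb⟩ := hbd
  rw [Finset.mem_sdiff] at hb
  have hbs : b ∉ s.1 := fun h => hb.2 (h1.1 h)
  have hkey := huniq ⟨insert b s.1, by
      rw [mem_bd_iff, Finset.card_insert_of_notMem hbs]; omega⟩
    ⟨bd_adj_iff.mpr (Or.inl ⟨Finset.subset_insert b s.1, by
        simp only [Finset.card_insert_of_notMem hbs]⟩),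
     bd_adj_iff.mpr (Or.inr ⟨Finset.insert_subset hb.1 (h1.1.trans h2.1), by
        simp only [Finset.card_insert_of_notMem hbs]; omega⟩)⟩
  have : b ∈ v.1 := by
    have := congrArg (fun t : BdVert n => t.1) hkey
    simp only at this
    rw [← this]
    exact Finset.mem_insert_self b s.1
  exact hb.2 this

/-- `s` is extreme iff some `w` satisfies `Rrel s w`. -/
def ExtV (s : BdVert n) : Prop := ∃ w, Rrel s w

lemma extV_iff (hn : 2 ≤ n) (s : BdVert n) :
    ExtV s ↔ s.1.card = 1 ∨ s.1.card = n := by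
  constructor
  · rintro ⟨w, hws, hnadj, v, hv, huniq⟩
    by_contra hmid
    push_neg at hmid
    have hb1 := @bd_card_pos n s
    have hb2 := @bd_card_le n s
    obtain ⟨v', hv'ne, hv'⟩ := two_common (by omega) (by omega) hws hv
    exact hv'ne (huniq v' hv')
  · rintro (hs | hs)
    · obtain ⟨i, hi⟩ := Finset.card_eq_one.mp hs
      obtain ⟨j, hij⟩ := Fintype.exists_ne_of_one_lt_card (by rw [Fintype.card_fin]; omega) i
      refine ⟨⟨{j}, by rw [mem_bd_iff]; simp; omega⟩, ?_⟩
      refine rrel_singletons hn hs (by simp) ?_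
      intro h
      have := congrArg (fun t : BdVert n => t.1) h
      simp only [hi] at this
      exact hij (Finset.singleton_injective this)
    · have hsc : s.1ᶜ.card = 1 := by
        rw [Finset.card_compl, Fintype.card_fin]; omega
      obtain ⟨i, hi⟩ := Finset.card_eq_one.mp hsc
      obtain ⟨j, hij⟩ := Fintype.exists_ne_of_one_lt_card (by rw [Fintype.card_fin]; omega) i
      refine ⟨⟨{j}ᶜ, by
        rw [mem_bd_iff, Finset.card_compl, Fintype.card_fin, Finset.card_singleton]
        omega⟩, ?_⟩
      refine rrel_cosingletons hn hs (by
        show ({j}ᶜ : Finset (Fin (n+1))).card = n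
        rw [Finset.card_compl, Fintype.card_fin, Finset.card_singleton]
        omega) ?_
      intro h
      have h2 := congrArg (fun t : BdVert n => t.1ᶜ) h
      simp only [compl_compl, hi] at h2
      exact hij (Finset.singleton_injective h2)

end AuxBd4

section AuxBd5

variable {n : ℕ}

lemma rrel_map {g : Equiv.Perm (BdVert n)} (hg : g ∈ autG (hasse (bdSimplex n)))
    {s w : BdVert n} (h : Rrel s w) : Rrel (g s) (g w) := by
  have hg' : ∀ u v : BdVert n,
      (hasse (bdSimplex n)).Adj (g u) (g v) ↔ (hasse (bdSimplex n)).Adj u v := hg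
  obtain ⟨hws, hnadj, v, hv, huniq⟩ := h
  refine ⟨fun hh => hws (g.injective hh), fun hh => hnadj ((hg' s w).mp hh), ?_⟩
  refine ⟨g v, ⟨(hg' s v).mpr hv.1, (hg' w v).mpr hv.2⟩, ?_⟩
  rintro v' ⟨h1, h2⟩
  have hu1 : (hasse (bdSimplex n)).Adj (g s) (g (g.symm v')) := by
    rwa [g.apply_symm_apply]
  have hu2 : (hasse (bdSimplex n)).Adj (g w) (g (g.symm v')) := by
    rwa [g.apply_symm_apply]
  have := huniq (g.symm v') ⟨(hg' s _).mp hu1, (hg' w _).mp hu2⟩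
  rw [← this, g.apply_symm_apply]

lemma extV_map {g : Equiv.Perm (BdVert n)} (hg : g ∈ autG (hasse (bdSimplex n)))
    {s : BdVert n} (h : ExtV s) : ExtV (g s) := by
  obtain ⟨w, hw⟩ := h
  exact ⟨g w, rrel_map hg hw⟩

lemma not_exu_mixed' (hn : 2 ≤ n) {s w : BdVert n} (hs : s.1.card = n)
    (hw : w.1.card = 1) : ¬ ∃! v, CNrel s w v := by
  rintro ⟨v, hv, hu⟩
  exact not_exu_mixed hn hw hs ⟨v, ⟨hv.2, hv.1⟩, fun y hy => hu y ⟨hy.2, hy.1⟩⟩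

lemma sing_dichotomy (hn : 2 ≤ n) {g : Equiv.Perm (BdVert n)}
    (hg : g ∈ autG (hasse (bdSimplex n))) :
    (∀ s : BdVert n, s.1.card = 1 → (g s).1.card = 1) ∨
    (∀ s : BdVert n, s.1.card = 1 → (g s).1.card = n) := by
  have hs0mem : ({0} : Finset (Fin (n + 1))) ∈ (bdSimplex n).faces := by
    rw [mem_bd_iff, Finset.card_singleton]
    omega
  set s₀ : BdVert n := ⟨{0}, hs0mem⟩ with hs₀
  have hs₀c : s₀.1.card = 1 := Finset.card_singleton 0
  have hext : ∀ s : BdVert n, s.1.card = 1 → (g s).1.card = 1 ∨ (g s).1.card = n :=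
    fun s hs => (extV_iff hn _).mp (extV_map hg ((extV_iff hn s).mpr (Or.inl hs)))
  rcases hext s₀ hs₀c with h0 | h0
  · left
    intro s hs
    by_cases hss : s = s₀
    · rw [hss]; exact h0
    have hR : Rrel (g s₀) (g s) :=
      rrel_map hg (rrel_singletons hn hs₀c hs hss)
    rcases hext s hs with h | h
    · exact h
    · exact absurd hR.2.2 (not_exu_mixed hn h0 h)
  · right
    intro s hs
    by_cases hss : s = s₀
    · rw [hss]; exact h0
    have hR : Rrel (g s₀) (g s) :=
      rrel_map hg (rrel_singletons hn hs₀c hs hss)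
    rcases hext s hs with h | h
    · exact absurd hR.2.2 (not_exu_mixed' hn h0 h)
    · exact h

end AuxBd5

section AuxBd6

variable {n : ℕ}

lemma mem_singleton_bd (i : Fin (n + 1)) (hn : 2 ≤ n) :
    ({i} : Finset (Fin (n + 1))) ∈ (bdSimplex n).faces := by
  rw [mem_bd_iff, Finset.card_singleton]
  omega

lemma exists_perm_of_sing (hn : 2 ≤ n) {g : Equiv.Perm (BdVert n)}
    (hg : g ∈ autG (hasse (bdSimplex n)))
    (hsing : ∀ s : BdVert n, s.1.card = 1 → (g s).1.card = 1) :
    ∃ e : Equiv.Perm (Fin (n + 1)), ∀ s : BdVert n, (g s).1 = s.1.image e := by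
  have hg' : ∀ u v : BdVert n,
      (hasse (bdSimplex n)).Adj (g u) (g v) ↔ (hasse (bdSimplex n)).Adj u v := hg
  choose f hf using fun i : Fin (n + 1) =>
    Finset.card_eq_one.mp (hsing ⟨{i}, mem_singleton_bd i hn⟩ (Finset.card_singleton i))
  have hfinj : Function.Injective f := by
    intro i j hij
    have h1 : g ⟨{i}, mem_singleton_bd i hn⟩ = g ⟨{j}, mem_singleton_bd j hn⟩ :=
      Subtype.ext (by rw [hf i, hf j, hij])
    have h2 := congrArg (fun t : BdVert n => t.1) (g.injective h1)
    exact Finset.singleton_injective h2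
  obtain ⟨e, he⟩ : ∃ e : Equiv.Perm (Fin (n + 1)), ∀ i, e i = f i :=
    ⟨Equiv.ofBijective f (Finite.injective_iff_bijective.mp hfinj), fun i => rfl⟩
  suffices h : ∀ k, ∀ s : BdVert n, s.1.card = k → (g s).1 = s.1.image e by
    exact ⟨e, fun s => h s.1.card s rfl⟩
  intro k
  induction k using Nat.strong_induction_on with
  | _ k ih =>
    intro s hsk
    rcases k with _ | k
    · exact absurd hsk (by have := @bd_card_pos n s; omega)
    rcases k with _ | k
    · -- base case: singletons
      obtain ⟨i, hi⟩ := Finset.card_eq_one.mp hsk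
      have hseq : s = ⟨{i}, mem_singleton_bd i hn⟩ := Subtype.ext hi
      rw [hseq, hf i]
      show ({f i} : Finset (Fin (n + 1))) = ({i} : Finset (Fin (n + 1))).image e
      rw [Finset.image_singleton, he i]
    · -- inductive step: s has card k + 2
      have hle := @bd_card_le n s
      have herase_mem : ∀ x ∈ s.1, s.1.erase x ∈ (bdSimplex n).faces := by
        intro x hx
        rw [mem_bd_iff, Finset.card_erase_of_mem hx]
        omega
      have hgadj : ∀ x (hx : x ∈ s.1),
          (hasse (bdSimplex n)).Adj (g ⟨s.1.erase x, herase_mem x hx⟩) (g s) := by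
        intro x hx
        refine (hg' _ s).mpr (bd_adj_iff.mpr (Or.inl ⟨Finset.erase_subset x s.1, ?_⟩))
        show s.1.card = (s.1.erase x).card + 1
        rw [Finset.card_erase_of_mem hx]
        omega
      have hIH : ∀ x (hx : x ∈ s.1),
          (g ⟨s.1.erase x, herase_mem x hx⟩).1 = (s.1.erase x).image e := by
        intro x hx
        exact ih (k + 1) (by omega) _ (by rw [Finset.card_erase_of_mem hx]; omega)
      have hIHcard : ∀ x (hx : x ∈ s.1),
          (g ⟨s.1.erase x, herase_mem x hx⟩).1.card = k + 1 := by
        intro x hx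
        rw [hIH x hx, Finset.card_image_of_injective _ e.injective,
          Finset.card_erase_of_mem hx]
        omega
      have hgcard : (g s).1.card = k + 2 := by
        by_contra hne
        have hdown : ∀ x (hx : x ∈ s.1),
            (g s).1 ⊆ (s.1.erase x).image e ∧ (g s).1.card = k := by
          intro x hx
          rcases bd_adj_iff.mp (hgadj x hx) with ⟨hsub, hc⟩ | ⟨hsub, hc⟩
          · exfalso
            apply hne
            rw [hc, hIHcard x hx]
          · rw [hIHcard x hx] at hc
            exact ⟨hIH x hx ▸ hsub, by omega⟩
        obtain ⟨x, hx, y, hy, hxy⟩ := Finset.one_lt_card.mp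
          (by omega : 1 < s.1.card)
        have hinter : (s.1.erase x) ∩ (s.1.erase y) = (s.1.erase x).erase y := by
          ext z
          simp only [Finset.mem_inter, Finset.mem_erase]
          tauto
        have hiecard : ((s.1.erase x) ∩ (s.1.erase y)).card = k := by
          rw [hinter, Finset.card_erase_of_mem
            (Finset.mem_erase.mpr ⟨Ne.symm hxy, hy⟩), Finset.card_erase_of_mem hx]
          omega
        have hsubinter : (g s).1 ⊆ ((s.1.erase x) ∩ (s.1.erase y)).image e := by
          rw [Finset.image_inter _ _ e.injective]
          exact Finset.subset_inter (hdown x hx).1 (hdown y hy).1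
        rcases Nat.eq_zero_or_pos k with hk | hk
        · have hcg := Finset.card_le_card hsubinter
          rw [Finset.card_image_of_injective _ e.injective, hiecard] at hcg
          have := @bd_card_pos n (g s)
          omega
        · have htmem : (s.1.erase x) ∩ (s.1.erase y) ∈ (bdSimplex n).faces := by
            rw [mem_bd_iff, hiecard]
            omega
          have hteq : (g s).1 = ((s.1.erase x) ∩ (s.1.erase y)).image e :=
            Finset.eq_of_subset_of_card_le hsubinter (by
              rw [Finset.card_image_of_injective _ e.injective, hiecard,
                (hdown x hx).2])
          have hIH2 : (g ⟨(s.1.erase x) ∩ (s.1.erase y), htmem⟩).1 =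
              ((s.1.erase x) ∩ (s.1.erase y)).image e :=
            ih k (by omega) _ hiecard
          have hgg : g ⟨(s.1.erase x) ∩ (s.1.erase y), htmem⟩ = g s :=
            Subtype.ext (by rw [hIH2, hteq])
          have hss : ((s.1.erase x) ∩ (s.1.erase y)).card = s.1.card :=
            congrArg (fun t : BdVert n => t.1.card) (g.injective hgg)
          rw [hiecard, hsk] at hss
          omega
      have hup : ∀ x (hx : x ∈ s.1), (s.1.erase x).image e ⊆ (g s).1 := by
        intro x hx
        rcases bd_adj_iff.mp (hgadj x hx) with ⟨hsub, hc⟩ | ⟨hsub, hc⟩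
        · rwa [hIH x hx] at hsub
        · exfalso
          rw [hIHcard x hx, hgcard] at hc
          omega
      have hsub2 : s.1.image e ⊆ (g s).1 := by
        intro z hz
        rw [Finset.mem_image] at hz
        obtain ⟨i, hi, rfl⟩ := hz
        obtain ⟨x, hx, hxi⟩ := Finset.exists_mem_ne
          (by omega : 1 < s.1.card) i
        exact hup x hx (Finset.mem_image_of_mem e
          (Finset.mem_erase.mpr ⟨Ne.symm hxi, hi⟩))
      exact (Finset.eq_of_subset_of_card_le hsub2 (by
        rw [Finset.card_image_of_injective _ e.injective]
        omega)).symm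

end AuxBd6

section AuxBd7

variable {n : ℕ}

lemma complV_mul_self : (complV n) * (complV n) = 1 :=
  Equiv.ext fun s => Subtype.ext (compl_compl s.1)

lemma aut_classify (hn : 2 ≤ n) {g : Equiv.Perm (BdVert n)}
    (hg : g ∈ autG (hasse (bdSimplex n))) :
    (∃ e, g = permV (n := n) e) ∨ (∃ e, g = (complV n) * (permV e)) := by
  rcases sing_dichotomy hn hg with hs | hs
  · obtain ⟨e, he⟩ := exists_perm_of_sing hn hg hs
    exact Or.inl ⟨e, Equiv.ext fun s => Subtype.ext (he s)⟩
  · right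
    have hg2 : (complV n) * g ∈ autG (hasse (bdSimplex n)) :=
      (autG _).mul_mem complV_mem_autG hg
    have hsing2 : ∀ s : BdVert n, s.1.card = 1 → (((complV n) * g) s).1.card = 1 := by
      intro s h1
      show ((complV n) (g s)).1.card = 1
      rw [complV_card, hs s h1]
      omega
    obtain ⟨e, he⟩ := exists_perm_of_sing hn hg2 hsing2
    refine ⟨e, ?_⟩
    have h1 : (complV n) * g = permV e := Equiv.ext fun s => Subtype.ext (he s)
    rw [← h1, ← mul_assoc, complV_mul_self, one_mul]

/-- The explicit parametrization of the automorphisms of the Hasse diagram. -/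
def PhiAut (n : ℕ) (hn : 2 ≤ n) (p : Equiv.Perm (Fin (n + 1)) × Bool) :
    (autG (hasse (bdSimplex n))) :=
  ⟨(if p.2 then complV n else 1) * permV p.1, by
    rcases p with ⟨e, b⟩
    cases b
    · simpa using permV_mem_autG e
    · exact (autG _).mul_mem (by simpa using (complV_mem_autG (n := n))) (permV_mem_autG e)⟩

lemma phi_card_v0 (hn : 2 ≤ n) (b : Bool) (e : Equiv.Perm (Fin (n + 1))) :
    ((((if b then complV n else 1) * permV e)) ⟨{0}, mem_singleton_bd 0 hn⟩).1.card
      = if b then n else 1 := by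
  have h1 : ((permV e) (⟨{0}, mem_singleton_bd 0 hn⟩ : BdVert n)).1.card = 1 := by
    rw [permV_coe, Finset.image_singleton, Finset.card_singleton]
  cases b
  · simpa using h1
  · simp only [if_pos]
    show ((complV n) ((permV e) _)).1.card = n
    rw [complV_card, h1]
    omega

lemma PhiAut_inj (hn : 2 ≤ n) : Function.Injective (PhiAut n hn) := by
  rintro ⟨e, b⟩ ⟨e', b'⟩ h
  have hval : (if b then complV n else 1) * permV e
      = (if b' then complV n else 1) * permV e' := congrArg Subtype.val h
  have hb : b = b' := by
    have h1 := phi_card_v0 hn b e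
    have h2 := phi_card_v0 hn b' e'
    rw [hval, h2] at h1
    cases b <;> cases b' <;> simp_all <;> omega
  subst hb
  have hpe : permV (n := n) e = permV e' := by
    cases b
    · simpa using hval
    · simp only [if_pos] at hval
      exact mul_left_cancel hval
  have hee : e = e' := by
    apply Equiv.ext
    intro i
    have h3 := congrArg
      (fun q : Equiv.Perm (BdVert n) => (q ⟨{i}, mem_singleton_bd i hn⟩).1) hpe
    simp only [permV_coe, Finset.image_singleton] at h3
    exact Finset.singleton_injective h3
  rw [hee]

lemma PhiAut_surj (hn : 2 ≤ n) : Function.Surjective (PhiAut n hn) := by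
  rintro ⟨g, hg⟩
  rcases aut_classify hn hg with ⟨e, rfl⟩ | ⟨e, rfl⟩
  · exact ⟨(e, false), Subtype.ext (by simp [PhiAut])⟩
  · exact ⟨(e, true), Subtype.ext (by simp [PhiAut])⟩

lemma card_autG_bd (hn : 2 ≤ n) :
    Nat.card (autG (hasse (bdSimplex n))) = 2 * Nat.factorial (n + 1) := by
  rw [← Nat.card_eq_of_bijective _ ⟨PhiAut_inj hn, PhiAut_surj hn⟩, Nat.card_prod,
    Nat.card_eq_fintype_card, Nat.card_eq_fintype_card, Fintype.card_perm,
    Fintype.card_fin, Fintype.card_bool]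
  ring

lemma card_autK_bd : Nat.card (autK (bdSimplex n)) = Nat.factorial (n + 1) := by
  rw [autK_bd_eq_top, Nat.card_congr Subgroup.topEquiv.toEquiv,
    Nat.card_eq_fintype_card, Fintype.card_perm, Fintype.card_fin]

end AuxBd7

/-- for `n ≥ 2`, the automorphism group of the Hasse diagram of
`∂Δⁿ` has order `2 · (n+1)! = 2 · |Aut(∂Δⁿ)|`. -/
theorem card_aut_hasse_bd (n : ℕ) (hn : 2 ≤ n) :
    Nat.card (autG (hasse (bdSimplex n))) = 2 * Nat.factorial (n + 1) ∧
    Nat.card (autG (hasse (bdSimplex n))) = 2 * Nat.card (autK (bdSimplex n)) := by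
  exact ⟨card_autG_bd hn, by rw [card_autG_bd hn, card_autK_bd]⟩
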